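/- arXiv:2605.04990 — 2 statements merged into one kernel-verified Lean document; each statement's English description precedes it below -/
import Mathlib

section
/- For b ≥ 0 and ℓ ∈ ℕ, the string m^ℓ p^{b+ℓ} (i.e., the b+ℓ least significant digits are p and the ℓ most significant digits are m) represents the vector (a, b)^T with a = b(b-1)/2 - ℓ². -/
/-- The Jordan block `[[1,1],[0,1]]`. -/
def M1 : Matrix (Fin 2) (Fin 2) ℤ := !![1, 1; 0, 1]

/-- The digit `p = (0,1)ᵀ`. -/
def pd : Fin 2 → ℤ := ![0, 1]

/-- The digit `m = (0,-1)ᵀ`. -/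
def md : Fin 2 → ℤ := ![0, -1]

/-- The vector represented by the word `d_{k-1} … d_0`, namely `∑ M^i d_i`. -/
def val1 {k : ℕ} (d : Fin k → (Fin 2 → ℤ)) : Fin 2 → ℤ :=
  ∑ i : Fin k, (M1 ^ (i : ℕ)).mulVec (d i)

lemma M1_pow (i : ℕ) : M1 ^ i = !![1, (i:ℤ); 0, 1] := by
  induction i with
  | zero => simp [Matrix.one_fin_two]
  | succ k ih =>
    rw [pow_succ, ih, M1]
    ext a b
    fin_cases a <;> fin_cases b <;>
      simp [Matrix.mul_apply, Fin.sum_univ_two] <;> push_cast <;> ring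

lemma mulVec_pd (i : ℕ) : (M1 ^ i).mulVec pd = ![(i:ℤ), 1] := by
  rw [M1_pow]
  ext x
  fin_cases x <;> simp [Matrix.mulVec, dotProduct, Fin.sum_univ_two, pd]

lemma mulVec_md (i : ℕ) : (M1 ^ i).mulVec md = ![-(i:ℤ), -1] := by
  rw [M1_pow]
  ext x
  fin_cases x <;> simp [Matrix.mulVec, dotProduct, Fin.sum_univ_two, md]

lemma gauss (n : ℕ) : (∑ i ∈ Finset.range n, (i:ℤ)) * 2 = n * (n - 1) := by
  induction n with
  | zero => simp
  | succ k ih =>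
    rw [Finset.sum_range_succ]
    push_cast
    push_cast at ih
    ring_nf
    ring_nf at ih
    linarith

theorem stmt2 (b ℓ : ℕ) :
    val1 (fun i : Fin (b + 2 * ℓ) => if (i : ℕ) < b + ℓ then pd else md)
      = ![(b : ℤ) * ((b : ℤ) - 1) / 2 - (ℓ : ℤ) ^ 2, (b : ℤ)] := by
  have hdiv : (2:ℤ) * ((b:ℤ) * ((b:ℤ) - 1) / 2) = (b:ℤ) * ((b:ℤ) - 1) := by
    apply Int.mul_ediv_cancel'
    have : Even ((b:ℤ) * ((b:ℤ) - 1)) := Int.even_mul_pred_self _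
    exact this.two_dvd
  funext x
  have : val1 (fun i : Fin (b + 2 * ℓ) => if (i : ℕ) < b + ℓ then pd else md) x
      = ∑ i ∈ Finset.range (b + 2 * ℓ),
          (if i < b + ℓ then (![(i:ℤ), 1] : Fin 2 → ℤ) else ![-(i:ℤ), -1]) x := by
    rw [val1, Finset.sum_apply]
    rw [← Fin.sum_univ_eq_sum_range (fun i =>
      (if i < b + ℓ then (![(i:ℤ), 1] : Fin 2 → ℤ) else ![-(i:ℤ), -1]) x)]
    congr 1
    funext i
    split <;> simp only [mulVec_pd, mulVec_md]
  rw [this]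
  have hsplit : b + 2 * ℓ = (b + ℓ) + ℓ := by omega
  rw [hsplit, Finset.sum_range_add]
  have h1 : ∀ i ∈ Finset.range (b + ℓ),
      (if i < b + ℓ then (![(i:ℤ), 1] : Fin 2 → ℤ) else ![-(i:ℤ), -1]) x
        = (![(i:ℤ), 1] : Fin 2 → ℤ) x := by
    intro i hi
    rw [if_pos (Finset.mem_range.mp hi)]
  have h2 : ∀ i ∈ Finset.range ℓ,
      (if (b + ℓ) + i < b + ℓ then (![((b+ℓ+i:ℕ):ℤ), 1] : Fin 2 → ℤ) else ![-((b+ℓ+i:ℕ):ℤ), -1]) x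
        = (![-((b+ℓ+i:ℕ):ℤ), -1] : Fin 2 → ℤ) x := by
    intro i _
    rw [if_neg (by omega)]
  rw [Finset.sum_congr rfl h1, Finset.sum_congr rfl h2]
  have g1 := gauss (b + ℓ)
  fin_cases x
  · simp only [Fin.isValue, Fin.zero_eta, Matrix.cons_val_zero, id_eq]
    have e1 : ∑ i ∈ Finset.range ℓ, (-((b+ℓ+i:ℕ):ℤ))
        = -((ℓ:ℤ) * ((b:ℤ)+ℓ)) - ∑ i ∈ Finset.range ℓ, (i:ℤ) := by
      push_cast
      rw [Finset.sum_neg_distrib]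
      ring_nf
      rw [Finset.sum_add_distrib]
      simp [Finset.sum_const, Finset.mul_sum]
      ring
    have g2 := gauss ℓ
    push_cast at g1 g2 e1 ⊢
    rw [e1]
    have : ∀ y : ℤ, 2 * y = (b:ℤ) * ((b:ℤ) - 1) - 2 * (ℓ:ℤ)^2 →
        y = (b:ℤ) * ((b:ℤ) - 1) / 2 - (ℓ:ℤ) ^ 2 := by
      intro y hy
      omega
    apply this
    ring_nf
    ring_nf at g1 g2
    linarith
  · simp only [show ((⟨1, by omega⟩ : Fin 2)) = 1 from rfl, Matrix.cons_val_one, Matrix.head_cons]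
    simp [Finset.sum_const]
end

section
/- Let h(a,b) denote the length of the shortest representation of (a,b)^T in base M = [[-1,1],[0,-1]] with digits {(0,1)^T, (0,0)^T}. If b > 0 and a = -b² + b, then h(a,b) = 2b - 1; if b ≤ 0 and a = b², then h(a,b) = 2|b|. -/
/-- The Jordan block `[[-1,1],[0,-1]]`. -/
def M2 : Matrix (Fin 2) (Fin 2) ℤ := !![-1, 1; 0, -1]

/-- The zero digit `z = (0,0)ᵀ`. -/
def zd : Fin 2 → ℤ := ![0, 0]

/-- The vector represented by the word `d_{k-1} … d_0`, namely `∑ M^i d_i`. -/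
def val2 {k : ℕ} (d : Fin k → (Fin 2 → ℤ)) : Fin 2 → ℤ :=
  ∑ i : Fin k, (M2 ^ (i : ℕ)).mulVec (d i)

/-- The set of lengths of representations of `(a,b)ᵀ` in base `M2` with digits `{p, z}`. -/
def RepLengths (a b : ℤ) : Set ℕ :=
  {k : ℕ | ∃ d : Fin k → (Fin 2 → ℤ), (∀ i, d i = pd ∨ d i = zd) ∧ val2 d = ![a, b]}

lemma M2pow (n : ℕ) : M2 ^ n = !![(-1)^n, (-1)^(n+1)*(n:ℤ); 0, (-1)^n] := by
  induction n with
  | zero => simp [Matrix.one_fin_two]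
  | succ n ih =>
    rw [pow_succ, ih]
    ext i j
    fin_cases i <;> fin_cases j <;>
      simp [M2, Matrix.mul_apply, Fin.sum_univ_two, pow_succ] <;> ring

lemma mulVec_pd_s15 (n : ℕ) : (M2 ^ n).mulVec pd = ![(-1)^(n+1)*(n:ℤ), (-1)^n] := by
  rw [M2pow]
  funext j
  fin_cases j <;> simp [Matrix.mulVec, dotProduct, Fin.sum_univ_two, pd]

lemma mulVec_zd (n : ℕ) : (M2 ^ n).mulVec zd = ![0, 0] := by
  funext j
  fin_cases j <;> simp [Matrix.mulVec, dotProduct, Fin.sum_univ_two, zd]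

open Finset in
lemma L1 (m : ℕ) : ∑ i ∈ range (2*m+1), (if Even i then ((-1:ℤ))^i else 0) = m + 1 := by
  induction m with
  | zero => simp
  | succ m ih =>
    rw [show 2*(m+1)+1 = (2*m+1)+1+1 by ring, Finset.sum_range_succ, Finset.sum_range_succ, ih]
    have h1 : ¬ Even (2*m+1) := by simp [Nat.even_add_one]
    have h2 : Even (2*m+1+1) := by simp [Nat.even_add_one, h1]
    simp [h1, h2, h2.neg_one_pow]

open Finset in
lemma L2 (m : ℕ) : ∑ i ∈ range (2*m+1), (if Even i then ((-1:ℤ))^(i+1)*(i:ℤ) else 0) = -((m:ℤ)^2 + m) := by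
  induction m with
  | zero => simp
  | succ m ih =>
    rw [show 2*(m+1)+1 = (2*m+1)+1+1 by ring, Finset.sum_range_succ, Finset.sum_range_succ, ih]
    have h1 : ¬ Even (2*m+1) := by simp [Nat.even_add_one]
    have h2 : Even (2*m+1+1) := by simp [Nat.even_add_one, h1]
    have h3 : Odd (2*m+1+1+1) := by simpa [Nat.even_add_one] using h2
    simp [h1, h2, h3.neg_one_pow]
    push_cast; ring

open Finset in
lemma L3 (m : ℕ) : ∑ i ∈ range (2*m), (if Even i then 0 else ((-1:ℤ))^i) = -(m:ℤ) := by
  induction m with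
  | zero => simp
  | succ m ih =>
    rw [show 2*(m+1) = (2*m)+1+1 by ring, Finset.sum_range_succ, Finset.sum_range_succ, ih]
    have h1 : Even (2*m) := ⟨m, by ring⟩
    have h2 : ¬ Even (2*m+1) := by simp [Nat.even_add_one, h1]
    have h3 : Odd (2*m+1) := Nat.not_even_iff_odd.1 h2
    simp [h1, h2, h3.neg_one_pow]
    push_cast; ring

open Finset in
lemma L4 (m : ℕ) : ∑ i ∈ range (2*m), (if Even i then 0 else ((-1:ℤ))^(i+1)*(i:ℤ)) = (m:ℤ)^2 := by
  induction m with
  | zero => simp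
  | succ m ih =>
    rw [show 2*(m+1) = (2*m)+1+1 by ring, Finset.sum_range_succ, Finset.sum_range_succ, ih]
    have h1 : Even (2*m) := ⟨m, by ring⟩
    have h2 : ¬ Even (2*m+1) := by simp [Nat.even_add_one, h1]
    have h4 : Even (2*m+1+1) := by simp [Nat.even_add_one, h2]
    simp [h1, h2, h4.neg_one_pow]
    push_cast; ring

open Finset in
lemma sum_bound (f : ℕ → ℤ) (hf : ∀ i, f i = (-1)^i ∨ f i = 0) (k : ℕ) :
    2 * ∑ i ∈ range k, f i ≤ k + (if Even k then 0 else 1) ∧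
    -(k:ℤ) + (if Even k then 0 else 1) ≤ 2 * ∑ i ∈ range k, f i := by
  induction k with
  | zero => simp
  | succ k ih =>
    rw [Finset.sum_range_succ]
    rcases Nat.even_or_odd k with he | ho
    · have hk : f k = 1 ∨ f k = 0 := by simpa [he.neg_one_pow] using hf k
      have h2 : ¬ Even (k+1) := by simp [Nat.even_add_one, he]
      simp only [he, if_pos, h2, if_neg, if_false, if_true] at ih ⊢
      push_cast
      omega
    · have hk : f k = -1 ∨ f k = 0 := by simpa [ho.neg_one_pow] using hf k
      have h1 : ¬ Even k := Nat.not_even_iff_odd.2 ho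
      have h2 : Even (k+1) := by simp [Nat.even_add_one, h1]
      simp only [h1, h2, if_neg, if_pos, if_false, if_true] at ih ⊢
      push_cast
      omega

lemma val2_comp {k : ℕ} (d : Fin k → (Fin 2 → ℤ)) (j : Fin 2) :
    val2 d j = ∑ i : Fin k, ((M2 ^ (i:ℕ)).mulVec (d i)) j := by
  rw [val2, Finset.sum_apply]

lemma mem_even (m : ℕ) :
    (2*m+1) ∈ RepLengths (-((m:ℤ)^2+m)) ((m:ℤ)+1) := by
  refine ⟨fun i => if Even (i:ℕ) then pd else zd,
    fun i => by by_cases h : Even (i:ℕ) <;> simp [h], ?_⟩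
  have key : ∀ j : Fin 2,
      val2 (fun i : Fin (2*m+1) => if Even (i:ℕ) then pd else zd) j
        = ∑ n ∈ Finset.range (2*m+1), ((M2^n).mulVec (if Even n then pd else zd)) j := by
    intro j
    rw [val2_comp]
    exact Fin.sum_univ_eq_sum_range
      (fun n => ((M2^n).mulVec (if Even n then pd else zd)) j) (2*m+1)
  have e0 : ∑ n ∈ Finset.range (2*m+1), ((M2^n).mulVec (if Even n then pd else zd)) 0
      = ∑ n ∈ Finset.range (2*m+1), (if Even n then ((-1:ℤ))^(n+1)*(n:ℤ) else 0) := by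
    refine Finset.sum_congr rfl fun n _ => ?_
    by_cases h : Even n <;> simp only [h, ↓reduceIte, mulVec_pd_s15, mulVec_zd] <;> simp
  have e1 : ∑ n ∈ Finset.range (2*m+1), ((M2^n).mulVec (if Even n then pd else zd)) 1
      = ∑ n ∈ Finset.range (2*m+1), (if Even n then ((-1:ℤ))^n else 0) := by
    refine Finset.sum_congr rfl fun n _ => ?_
    by_cases h : Even n <;> simp only [h, ↓reduceIte, mulVec_pd_s15, mulVec_zd] <;> simp
  have h0 := (key 0).trans (e0.trans (L2 m))
  have h1 := (key 1).trans (e1.trans (L1 m))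
  funext j
  fin_cases j
  · simpa using h0
  · simpa using h1

lemma mem_odd (m : ℕ) :
    (2*m) ∈ RepLengths ((m:ℤ)^2) (-(m:ℤ)) := by
  refine ⟨fun i => if Even (i:ℕ) then zd else pd,
    fun i => by by_cases h : Even (i:ℕ) <;> simp [h], ?_⟩
  have key : ∀ j : Fin 2,
      val2 (fun i : Fin (2*m) => if Even (i:ℕ) then zd else pd) j
        = ∑ n ∈ Finset.range (2*m), ((M2^n).mulVec (if Even n then zd else pd)) j := by
    intro j
    rw [val2_comp]
    exact Fin.sum_univ_eq_sum_range
      (fun n => ((M2^n).mulVec (if Even n then zd else pd)) j) (2*m)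
  have e0 : ∑ n ∈ Finset.range (2*m), ((M2^n).mulVec (if Even n then zd else pd)) 0
      = ∑ n ∈ Finset.range (2*m), (if Even n then 0 else ((-1:ℤ))^(n+1)*(n:ℤ)) := by
    refine Finset.sum_congr rfl fun n _ => ?_
    by_cases h : Even n <;> simp only [h, ↓reduceIte, mulVec_pd_s15, mulVec_zd] <;> simp
  have e1 : ∑ n ∈ Finset.range (2*m), ((M2^n).mulVec (if Even n then zd else pd)) 1
      = ∑ n ∈ Finset.range (2*m), (if Even n then 0 else ((-1:ℤ))^n) := by
    refine Finset.sum_congr rfl fun n _ => ?_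
    by_cases h : Even n <;> simp only [h, ↓reduceIte, mulVec_pd_s15, mulVec_zd] <;> simp
  have h0 := (key 0).trans (e0.trans (L4 m))
  have h1 := (key 1).trans (e1.trans (L3 m))
  funext j
  fin_cases j
  · simpa using h0
  · simpa using h1

lemma lower_bd (a b : ℤ) (k : ℕ) (hk : k ∈ RepLengths a b) :
    2*b ≤ (k:ℤ)+1 ∧ -(k:ℤ) ≤ 2*b := by
  obtain ⟨d, hd, hv⟩ := hk
  set f : ℕ → ℤ := fun n => if h : n < k then ((M2^n).mulVec (d ⟨n,h⟩)) 1 else 0 with hfdef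
  have hf : ∀ i, f i = (-1)^i ∨ f i = 0 := by
    intro i
    by_cases h : i < k
    · rcases hd ⟨i,h⟩ with hp | hz
      · left; simp only [hfdef]; rw [dif_pos h, hp, mulVec_pd_s15]; simp
      · right; simp only [hfdef]; rw [dif_pos h, hz, mulVec_zd]; simp
    · right; simp [hfdef, h]
  have hs : ∑ i ∈ Finset.range k, f i = b := by
    have e1 : ∑ i : Fin k, f ↑i = ∑ i : Fin k, ((M2^(i:ℕ)).mulVec (d i)) 1 := by
      refine Finset.sum_congr rfl fun i _ => ?_
      simp only [hfdef]
      rw [dif_pos i.isLt]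
    rw [← Fin.sum_univ_eq_sum_range f k, e1, ← val2_comp, hv]
    simp
  have := sum_bound f hf k
  rw [hs] at this
  split_ifs at this <;> omega

theorem stmt15 (a b : ℤ) :
    (0 < b → a = -b ^ 2 + b → IsLeast (RepLengths a b) (2 * b.toNat - 1)) ∧
    (b ≤ 0 → a = b ^ 2 → IsLeast (RepLengths a b) (2 * b.natAbs)) := by
  constructor
  · intro hb ha
    obtain ⟨m, hm⟩ : ∃ m, b.toNat = m+1 := ⟨b.toNat - 1, by omega⟩
    have hbz : b = (m:ℤ)+1 := by omega
    have haz : a = -((m:ℤ)^2+(m:ℤ)) := by rw [ha, hbz]; ring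
    have hk : 2*b.toNat - 1 = 2*m+1 := by omega
    constructor
    · rw [hk, haz, hbz]
      exact mem_even m
    · intro k hk'
      have := lower_bd a b k hk'
      omega
  · intro hb ha
    have h1 : ((b.natAbs : ℤ)) = -b := by omega
    constructor
    · have := mem_odd b.natAbs
      rw [h1, show ((-b)^2 : ℤ) = b^2 by ring, neg_neg, ← ha] at this
      exact this
    · intro k hk'
      have := lower_bd a b k hk'
      omega
end
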